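/- arXiv:2401.03349 — 2 statements merged into one kernel-verified Lean document; each statement's English description precedes it below -/
import Mathlib

section
/- Backward-pass flow conservation: consider the sub-DAG of a smooth, decomposable, alternating PC induced by nodes whose scope contains a fixed variable X_i, with backward values defined by bk(root) = 1, bk(n) = Σ_{m ∈ pa(n)} (θ_{m,n} · fw(n)/fw(m)) · bk(m) for product nodes n, and bk(n) = Σ_{m ∈ pa(n)} bk(m) for sum and input nodes n (parents taken within the sub-DAG). Assume all forward values fw are strictly positive. Then the sum of backward values over all input nodes whose variable is X_i equals 1. -/
open scoped Classical
open Finset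

/-- Kinds of nodes of a probabilistic circuit DAG. -/
inductive NodeKind (d C : ℕ) : Type where
  | input (i : Fin d) (f : Fin C → ℝ)
  | sum
  | prod

/-- A probabilistic circuit represented as a DAG: nodes are `Fin n`, `edge p c` means `c` is
a child of `p`, `θ` are sum-edge parameters, edges go from larger to smaller indices
(acyclicity), and `root` is a designated root node. -/
structure PCDag (d C : ℕ) where
  n : ℕ
  kind : Fin n → NodeKind d C
  edge : Fin n → Fin n → Prop
  θ : Fin n → Fin n → ℝ
  topo : ∀ p c, edge p c → (c : ℕ) < (p : ℕ)
  root : Fin n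

namespace PCDag

variable {d C : ℕ}

noncomputable def children (G : PCDag d C) (v : Fin G.n) : Finset (Fin G.n) :=
  Finset.univ.filter fun c => G.edge v c

noncomputable def parents (G : PCDag d C) (v : Fin G.n) : Finset (Fin G.n) :=
  Finset.univ.filter fun p => G.edge p v

def IsSum (G : PCDag d C) (v : Fin G.n) : Prop := G.kind v = NodeKind.sum
def IsProd (G : PCDag d C) (v : Fin G.n) : Prop := G.kind v = NodeKind.prod
def IsInputOn (G : PCDag d C) (v : Fin G.n) (i : Fin d) : Prop :=
  ∃ f, G.kind v = NodeKind.input i f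
def IsInput (G : PCDag d C) (v : Fin G.n) : Prop := ∃ i, G.IsInputOn v i

/-- The pmf attached to an input node (junk value `0` on non-input nodes). -/
noncomputable def inputF (G : PCDag d C) (v : Fin G.n) : Fin C → ℝ :=
  match G.kind v with
  | NodeKind.input _ f => f
  | _ => 0

/-- `scope` is the scope function of the DAG: variables of descendant input nodes. -/
def ScopeFun (G : PCDag d C) (scope : Fin G.n → Finset (Fin d)) : Prop :=
  ∀ v, scope v =
    match G.kind v with
    | NodeKind.input i _ => {i}
    | _ => (G.children v).biUnion scope

/-- `fw` is the soft-evidence forward pass with weight functions `w`: an input node on `X i`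
outputs `Σ_x f x * w i x`, product nodes multiply their children's values, and sum nodes
take the `θ`-weighted sums of their children's values. -/
def FwFun (G : PCDag d C) (w : Fin d → Fin C → ℝ) (fw : Fin G.n → ℝ) : Prop :=
  ∀ v, fw v =
    match G.kind v with
    | NodeKind.input i f => ∑ x, f x * w i x
    | NodeKind.prod => ∏ c ∈ G.children v, fw c
    | NodeKind.sum => ∑ c ∈ G.children v, G.θ v c * fw c

/-- `bk` is the backward pass: `bk root = 1`, for product nodes
`bk v = Σ_{m ∈ parents v} (θ m v · fw v / fw m) · bk m`, and for sum and input nodes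
`bk v = Σ_{m ∈ parents v} bk m`. -/
def BkFun (G : PCDag d C) (fw bk : Fin G.n → ℝ) : Prop :=
  ∀ v, bk v =
    if v = G.root then 1
    else
      match G.kind v with
      | NodeKind.prod => ∑ m ∈ G.parents v, (G.θ m v * fw v / fw m) * bk m
      | _ => ∑ m ∈ G.parents v, bk m

/-- `sem` is the distribution semantics of the DAG (as functions of full assignments). -/
def SemFun (G : PCDag d C) (sem : Fin G.n → (Fin d → Fin C) → ℝ) : Prop :=
  ∀ v x, sem v x =
    match G.kind v with
    | NodeKind.input i f => f (x i)
    | NodeKind.prod => ∏ c ∈ G.children v, sem c x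
    | NodeKind.sum => ∑ c ∈ G.children v, G.θ v c * sem c x

/-- Smoothness: children of every sum node have the same scope. -/
def Smooth (G : PCDag d C) (scope : Fin G.n → Finset (Fin d)) : Prop :=
  ∀ v, G.IsSum v → ∀ c₁ ∈ G.children v, ∀ c₂ ∈ G.children v, scope c₁ = scope c₂

/-- Decomposability: children of every product node have pairwise disjoint scopes. -/
def Decomposable (G : PCDag d C) (scope : Fin G.n → Finset (Fin d)) : Prop :=
  ∀ v, G.IsProd v → ∀ c₁ ∈ G.children v, ∀ c₂ ∈ G.children v,
    c₁ ≠ c₂ → Disjoint (scope c₁) (scope c₂)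

/-- The PC alternates sum and product layers and all parents of input nodes are products. -/
def Alternating (G : PCDag d C) : Prop :=
  ∀ p c, G.edge p c →
    (G.IsSum p → G.IsProd c) ∧ (G.IsProd p → G.IsSum c ∨ G.IsInput c) ∧ ¬ G.IsInput p

/-- Sum-node edge weights are nonnegative and sum to 1 over the children. -/
def ValidSumWeights (G : PCDag d C) : Prop :=
  ∀ v, G.IsSum v → (∀ c ∈ G.children v, 0 ≤ G.θ v c) ∧ ∑ c ∈ G.children v, G.θ v c = 1

/-- Every sum/product node has at least one child. -/
def InternalNonempty (G : PCDag d C) : Prop :=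
  ∀ v, ¬ G.IsInput v → (G.children v).Nonempty

end PCDag

/-- **Backward-pass flow conservation**: in a smooth, decomposable, alternating PC with
convex sum weights and strictly positive forward values, the backward pass (restricted to
the sub-DAG of nodes whose scope contains a fixed variable `X i`; by smoothness and
decomposability all parents of such nodes automatically lie in this sub-DAG, so the global
recurrences agree with the sub-DAG ones) satisfies: the sum of backward values over all
input nodes whose variable is `X i` equals 1. -/
theorem backward_flow_conservation {d C : ℕ} (G : PCDag d C)
    (w : Fin d → Fin C → ℝ)
    (scope : Fin G.n → Finset (Fin d)) (hscope : G.ScopeFun scope)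
    (fw : Fin G.n → ℝ) (hfw : G.FwFun w fw)
    (bk : Fin G.n → ℝ) (hbk : G.BkFun fw bk)
    (hsm : G.Smooth scope) (hdec : G.Decomposable scope)
    (halt : G.Alternating) (hθ : G.ValidSumWeights)
    (hpos : ∀ v, 0 < fw v)
    (hne : G.InternalNonempty)
    (hrootTop : ∀ p, ¬ G.edge p G.root)
    (i : Fin d) (hi : i ∈ scope G.root) :
    ∑ v ∈ Finset.univ.filter (fun v => G.IsInputOn v i), bk v = 1 := by
  classical
  have hmemc : ∀ v c : Fin G.n, c ∈ G.children v ↔ G.edge v c := by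
    intro v c; simp [PCDag.children]
  have hmemp : ∀ v p : Fin G.n, p ∈ G.parents v ↔ G.edge p v := by
    intro v p; simp [PCDag.parents]
  set S : Finset (Fin G.n) := Finset.univ.filter (fun v => i ∈ scope v) with hSdef
  have hmemS : ∀ v, v ∈ S ↔ i ∈ scope v := by intro v; simp [hSdef]
  set δ : Fin G.n → Fin G.n → ℝ :=
    fun p c => if G.IsSum p then (G.θ p c * fw c / fw p) * bk p else bk p with hδdef
  -- parent closure of S
  have hpar : ∀ p c, G.edge p c → i ∈ scope c → i ∈ scope p := by
    intro p c hpc hic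
    have hni : ¬ G.IsInput p := (halt p c hpc).2.2
    have hs := hscope p
    cases hk : G.kind p with
    | input j f => exact absurd ⟨j, f, hk⟩ hni
    | sum =>
        rw [hk] at hs; rw [hs]
        exact Finset.mem_biUnion.2 ⟨c, (hmemc p c).2 hpc, hic⟩
    | prod =>
        rw [hk] at hs; rw [hs]
        exact Finset.mem_biUnion.2 ⟨c, (hmemc p c).2 hpc, hic⟩
  -- outflow identity
  have key1 : ∀ v ∈ S, (∑ c ∈ S, if G.edge v c then δ v c else 0)
      = if G.IsInput v then 0 else bk v := by
    intro v hvS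
    have hivS : i ∈ scope v := (hmemS v).1 hvS
    have hsum_filter : (∑ c ∈ S, if G.edge v c then δ v c else 0)
        = ∑ c ∈ S.filter (fun c => G.edge v c), δ v c := (Finset.sum_filter _ _).symm
    cases hk : G.kind v with
    | input j f =>
        have hv : G.IsInput v := ⟨j, f, hk⟩
        rw [if_pos hv, hsum_filter]
        have : S.filter (fun c => G.edge v c) = ∅ := by
          apply Finset.filter_false_of_mem
          intro c _ hvc
          exact (halt v c hvc).2.2 hv
        rw [this, Finset.sum_empty]
    | sum =>
        have hv : ¬ G.IsInput v := by
          rintro ⟨j, f, hf⟩; rw [hk] at hf; exact absurd hf (by simp)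
        have hvsum : G.IsSum v := hk
        rw [if_neg hv, hsum_filter]
        -- a child with i in scope
        have hs := hscope v; rw [hk] at hs
        obtain ⟨c0, hc0, hic0⟩ := Finset.mem_biUnion.1 (hs ▸ hivS)
        -- all children in S
        have hall : ∀ c ∈ G.children v, i ∈ scope c := by
          intro c hc
          rw [hsm v hvsum c hc c0 hc0]; exact hic0
        have hfilt : S.filter (fun c => G.edge v c) = G.children v := by
          ext c
          simp only [Finset.mem_filter, hmemS, hmemc]
          constructor
          · rintro ⟨_, h⟩; exact h
          · intro h; exact ⟨hall c ((hmemc v c).2 h), h⟩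
        rw [hfilt]
        have hfwv := hfw v; rw [hk] at hfwv
        have hδc : ∀ c ∈ G.children v, δ v c = (G.θ v c * fw c) * (bk v / fw v) := by
          intro c _
          rw [hδdef]; simp only [if_pos hvsum]; ring
        have hfwv' : fw v = ∑ c ∈ G.children v, G.θ v c * fw c := hfwv
        rw [Finset.sum_congr rfl hδc, ← Finset.sum_mul, ← hfwv']
        have hne0 : fw v ≠ 0 := ne_of_gt (hpos v)
        field_simp
    | prod =>
        have hv : ¬ G.IsInput v := by
          rintro ⟨j, f, hf⟩; rw [hk] at hf; exact absurd hf (by simp)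
        have hvprod : G.IsProd v := hk
        have hvnotsum : ¬ G.IsSum v := by
          intro h; rw [PCDag.IsSum, hk] at h; exact absurd h (by simp)
        rw [if_neg hv, hsum_filter]
        have hs := hscope v; rw [hk] at hs
        obtain ⟨c0, hc0, hic0⟩ := Finset.mem_biUnion.1 (hs ▸ hivS)
        have hfilt : S.filter (fun c => G.edge v c) = {c0} := by
          ext c
          simp only [Finset.mem_filter, hmemS, Finset.mem_singleton]
          constructor
          · rintro ⟨hic, h⟩
            by_contra hne
            have hdisj := hdec v hvprod c ((hmemc v c).2 h) c0 hc0 hne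
            exact Finset.disjoint_left.1 hdisj hic hic0
          · rintro rfl; exact ⟨hic0, (hmemc _ _).1 hc0⟩
        rw [hfilt, Finset.sum_singleton, hδdef]
        simp only [if_neg hvnotsum]
  -- inflow identity
  have key2 : ∀ c ∈ S, (∑ p ∈ S, if G.edge p c then δ p c else 0)
      = if c = G.root then 0 else bk c := by
    intro c hcS
    have hicS : i ∈ scope c := (hmemS c).1 hcS
    have hsum_filter : (∑ p ∈ S, if G.edge p c then δ p c else 0)
        = ∑ p ∈ S.filter (fun p => G.edge p c), δ p c := (Finset.sum_filter _ _).symm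
    by_cases hroot : c = G.root
    · subst hroot
      rw [if_pos rfl, hsum_filter]
      have : S.filter (fun p => G.edge p G.root) = ∅ := by
        apply Finset.filter_false_of_mem
        intro p _ h; exact hrootTop p h
      rw [this, Finset.sum_empty]
    · rw [if_neg hroot, hsum_filter]
      have hfilt : S.filter (fun p => G.edge p c) = G.parents c := by
        ext p
        simp only [Finset.mem_filter, hmemS, hmemp]
        constructor
        · rintro ⟨_, h⟩; exact h
        · intro h; exact ⟨hpar p c h hicS, h⟩
      rw [hfilt]
      have hbkc := hbk c; rw [if_neg hroot] at hbkc
      cases hk : G.kind c with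
      | prod =>
          have hcprod : G.IsProd c := hk
          rw [hk] at hbkc
          rw [hbkc]
          apply Finset.sum_congr rfl
          intro p hp
          have hpc : G.edge p c := (hmemp c p).1 hp
          have halt' := halt p c hpc
          have hpsum : G.IsSum p := by
            cases hkp : G.kind p with
            | input j f => exact absurd ⟨j, f, hkp⟩ halt'.2.2
            | sum => exact hkp
            | prod =>
                rcases halt'.2.1 hkp with h | h
                · rw [PCDag.IsSum, hk] at h; exact absurd h (by simp)
                · rcases h with ⟨j, f, hf⟩; rw [hk] at hf; exact absurd hf (by simp)
          rw [hδdef]; simp only [if_pos hpsum]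
      | sum =>
          rw [hk] at hbkc
          rw [hbkc]
          apply Finset.sum_congr rfl
          intro p hp
          have hpc : G.edge p c := (hmemp c p).1 hp
          have hpnotsum : ¬ G.IsSum p := by
            intro h
            have := (halt p c hpc).1 h
            rw [PCDag.IsProd, hk] at this; exact absurd this (by simp)
          rw [hδdef]; simp only [if_neg hpnotsum]
      | input j f =>
          rw [hk] at hbkc
          rw [hbkc]
          apply Finset.sum_congr rfl
          intro p hp
          have hpc : G.edge p c := (hmemp c p).1 hp
          have hpnotsum : ¬ G.IsSum p := by
            intro h
            have := (halt p c hpc).1 h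
            rw [PCDag.IsProd, hk] at this; exact absurd this (by simp)
          rw [hδdef]; simp only [if_neg hpnotsum]
  -- double counting
  have hdouble : (∑ v ∈ S, if G.IsInput v then 0 else bk v)
      = ∑ c ∈ S, if c = G.root then 0 else bk c := by
    calc (∑ v ∈ S, if G.IsInput v then 0 else bk v)
        = ∑ v ∈ S, ∑ c ∈ S, (if G.edge v c then δ v c else 0) := by
          exact (Finset.sum_congr rfl key1).symm
      _ = ∑ c ∈ S, ∑ v ∈ S, (if G.edge v c then δ v c else 0) := Finset.sum_comm
      _ = ∑ c ∈ S, if c = G.root then 0 else bk c := Finset.sum_congr rfl key2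
  have hrootS : G.root ∈ S := (hmemS G.root).2 hi
  have hbkroot : bk G.root = 1 := by
    have := hbk G.root; rw [if_pos rfl] at this; exact this
  -- rewrite both sides
  have hL : (∑ v ∈ S, if G.IsInput v then 0 else bk v)
      = (∑ v ∈ S, bk v) - ∑ v ∈ S.filter (fun v => G.IsInput v), bk v := by
    have h1 : ∑ v ∈ S.filter (fun v => G.IsInput v), bk v
        = ∑ v ∈ S, if G.IsInput v then bk v else 0 := Finset.sum_filter _ _
    rw [h1, ← Finset.sum_sub_distrib]
    apply Finset.sum_congr rfl
    intro v _
    by_cases h : G.IsInput v <;> simp [h]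
  have hR : (∑ c ∈ S, if c = G.root then 0 else bk c)
      = (∑ c ∈ S, bk c) - bk G.root := by
    rw [← Finset.sum_erase_eq_sub hrootS, ← Finset.filter_ne']
    have h1 : ∑ c ∈ S.filter (fun c => c ≠ G.root), bk c
        = ∑ c ∈ S, if c ≠ G.root then bk c else 0 := Finset.sum_filter _ _
    rw [h1]
    apply Finset.sum_congr rfl
    intro c _
    by_cases h : c = G.root <;> simp [h]
  have hinputsum : ∑ v ∈ S.filter (fun v => G.IsInput v), bk v = 1 := by
    have := hdouble
    rw [hL, hR] at this
    have h2 : ∑ v ∈ S.filter (fun v => G.IsInput v), bk v = bk G.root := by linarith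
    rw [h2, hbkroot]
  -- identify the index sets
  have hsets : Finset.univ.filter (fun v => G.IsInputOn v i)
      = S.filter (fun v => G.IsInput v) := by
    ext v
    simp only [Finset.mem_filter, Finset.mem_univ, true_and, hmemS]
    constructor
    · rintro ⟨f, hf⟩
      have hs := hscope v; rw [hf] at hs
      exact ⟨by rw [hs]; exact Finset.mem_singleton_self i, ⟨i, f, hf⟩⟩
    · rintro ⟨hiv, j, f, hf⟩
      have hs := hscope v; rw [hf] at hs
      rw [hs, Finset.mem_singleton] at hiv
      subst hiv
      exact ⟨f, hf⟩
  rw [hsets, hinputsum]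
end

section
/- Perturbation semantics of the backward value: in a smooth, decomposable PC with strictly positive forward values, for any node n with backward value bk(n) (defined as in the backward pass with bk(root)=1), if the forward value of n is replaced by fw'(n) while all other inputs are unchanged, the root's recomputed value equals (1 − bk(n))·fw(root) + bk(n)·fw(root)·fw'(n)/fw(n). Equivalently, the root value is an affine function of fw'(n) with slope bk(n)·fw(root)/fw(n). -/
open scoped Classical
open Finset

namespace PCDag

/-- `fw'` recomputes the forward pass with the forward value of node `n₀` replaced by `t`
while all other inputs are unchanged. -/
def FwReplaceFun {d C : ℕ} (G : PCDag d C) (w : Fin d → Fin C → ℝ)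
    (n₀ : Fin G.n) (t : ℝ) (fw' : Fin G.n → ℝ) : Prop :=
  ∀ v, fw' v =
    if v = n₀ then t
    else
      match G.kind v with
      | NodeKind.input i f => ∑ x, f x * w i x
      | NodeKind.prod => ∏ c ∈ G.children v, fw' c
      | NodeKind.sum => ∑ c ∈ G.children v, G.θ v c * fw' c

end PCDag
set_option linter.dupNamespace false
set_option maxHeartbeats 1000000

namespace PCDag
variable {d C : ℕ}

lemma mem_children {G : PCDag d C} {v c : Fin G.n} : c ∈ G.children v ↔ G.edge v c := by
  simp [children]

lemma mem_parents {G : PCDag d C} {v p : Fin G.n} : p ∈ G.parents v ↔ G.edge p v := by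
  simp [parents]

lemma kind_cases (G : PCDag d C) (v : Fin G.n) :
    G.IsSum v ∨ G.IsProd v ∨ G.IsInput v := by
  rcases h : G.kind v with ⟨i, f⟩ | _ | _
  · exact Or.inr (Or.inr ⟨i, f, h⟩)
  · exact Or.inl h
  · exact Or.inr (Or.inl h)

/-- Sensitivity of node `b` w.r.t. node `a` (normalized). -/
noncomputable def S (G : PCDag d C) (fw : Fin G.n → ℝ) (a : Fin G.n) : Fin G.n → ℝ
  | b =>
    if b = a then 1
    else
      match G.kind b with
      | .input _ _ => 0
      | .sum => ∑ c ∈ (G.children b).attach, G.θ b c.1 * S G fw a c.1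
      | .prod => ∑ c ∈ (G.children b).attach, (fw b / fw c.1) * S G fw a c.1
  termination_by b => b.val
  decreasing_by all_goals exact G.topo _ _ (mem_children.mp c.2)

lemma S_self (G : PCDag d C) (fw : Fin G.n → ℝ) (a : Fin G.n) : S G fw a a = 1 := by
  rw [S]; simp

lemma S_input {G : PCDag d C} (fw : Fin G.n → ℝ) {a b : Fin G.n} {i f}
    (h : G.kind b = .input i f) (hne : b ≠ a) : S G fw a b = 0 := by
  rw [S]; simp [hne, h]

lemma S_sum {G : PCDag d C} (fw : Fin G.n → ℝ) {a b : Fin G.n}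
    (h : G.kind b = .sum) (hne : b ≠ a) :
    S G fw a b = ∑ c ∈ G.children b, G.θ b c * S G fw a c := by
  rw [S]; simp only [hne, if_false, h]
  exact Finset.sum_attach (G.children b) (fun c => G.θ b c * S G fw a c)

lemma S_prod {G : PCDag d C} (fw : Fin G.n → ℝ) {a b : Fin G.n}
    (h : G.kind b = .prod) (hne : b ≠ a) :
    S G fw a b = ∑ c ∈ G.children b, (fw b / fw c) * S G fw a c := by
  rw [S]; simp only [hne, if_false, h]
  exact Finset.sum_attach (G.children b) (fun c => (fw b / fw c) * S G fw a c)

/-- Support: sensitivity vanishes below `a`. -/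
lemma S_eq_zero_of_lt {G : PCDag d C} (fw : Fin G.n → ℝ) (a : Fin G.n) :
    ∀ b : Fin G.n, b.val < a.val → S G fw a b = 0
  | b, hb => by
    have hne : b ≠ a := by intro h; subst h; omega
    rcases h : G.kind b with ⟨i, f⟩ | _ | _
    · exact S_input fw h hne
    · rw [S_sum fw h hne]
      refine Finset.sum_eq_zero fun c hc => ?_
      rw [S_eq_zero_of_lt fw a c (lt_trans (G.topo _ _ (mem_children.mp hc)) hb)]
      ring
    · rw [S_prod fw h hne]
      refine Finset.sum_eq_zero fun c hc => ?_
      rw [S_eq_zero_of_lt fw a c (lt_trans (G.topo _ _ (mem_children.mp hc)) hb)]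
      ring
  termination_by b => b.val
  decreasing_by all_goals exact G.topo _ _ (mem_children.mp hc)

/-- Monotonicity of scope along sensitivity. -/
lemma scope_subset_of_S_ne_zero {G : PCDag d C} (fw : Fin G.n → ℝ)
    (scope : Fin G.n → Finset (Fin d)) (hscope : G.ScopeFun scope) (a : Fin G.n) :
    ∀ b : Fin G.n, S G fw a b ≠ 0 → scope a ⊆ scope b
  | b, hS => by
    by_cases hne : b = a
    · subst hne; exact Finset.Subset.refl _
    rcases h : G.kind b with ⟨i, f⟩ | _ | _
    · exact absurd (S_input fw h hne) hS
    · rw [S_sum fw h hne] at hS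
      obtain ⟨c, hc, hcne⟩ := Finset.exists_ne_zero_of_sum_ne_zero hS
      have hSc : S G fw a c ≠ 0 := fun h0 => hcne (by rw [h0]; ring)
      refine (scope_subset_of_S_ne_zero fw scope hscope a c hSc).trans ?_
      have hsc := hscope b
      simp only [h] at hsc
      rw [hsc]
      exact Finset.subset_biUnion_of_mem scope hc
    · rw [S_prod fw h hne] at hS
      obtain ⟨c, hc, hcne⟩ := Finset.exists_ne_zero_of_sum_ne_zero hS
      have hSc : S G fw a c ≠ 0 := fun h0 => hcne (by rw [h0]; ring)
      refine (scope_subset_of_S_ne_zero fw scope hscope a c hSc).trans ?_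
      have hsc := hscope b
      simp only [h] at hsc
      rw [hsc]
      exact Finset.subset_biUnion_of_mem scope hc
  termination_by b => b.val
  decreasing_by all_goals exact G.topo _ _ (mem_children.mp hc)

/-- Perturbation: `fw'` is `fw` shifted by the sensitivity times the input perturbation. -/
lemma fw'_affine {G : PCDag d C} {w : Fin d → Fin C → ℝ}
    {scope : Fin G.n → Finset (Fin d)} (hscope : G.ScopeFun scope)
    {fw : Fin G.n → ℝ} (hfw : G.FwFun w fw)
    (hdec : G.Decomposable scope)
    (hpos : ∀ v, 0 < fw v)
    (hscopene : ∀ v, (scope v).Nonempty)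
    {n₀ : Fin G.n} {t : ℝ}
    {fw' : Fin G.n → ℝ} (hfw' : G.FwReplaceFun w n₀ t fw') :
    ∀ b : Fin G.n, fw' b = fw b + S G fw n₀ b * (t - fw n₀)
  | b => by
    by_cases hne : b = n₀
    · subst hne
      rw [hfw' b, S_self]
      simp
      show t = fw b + (t - fw b)
      ring
    rcases h : G.kind b with ⟨i, f⟩ | _ | _
    · rw [hfw' b, S_input fw h hne]
      simp only [hne, if_false, h]
      rw [hfw b]
      simp only [h]
      ring
    · -- sum node
      have hrec : ∀ c ∈ G.children b, fw' c = fw c + S G fw n₀ c * (t - fw n₀) :=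
        fun c hc => fw'_affine hscope hfw hdec hpos hscopene hfw' c
      rw [hfw' b]
      simp only [hne, if_false, h]
      rw [Finset.sum_congr rfl (fun c hc => by rw [hrec c hc])]
      rw [S_sum fw h hne, hfw b]
      simp only [h, Finset.sum_mul, mul_add]
      rw [Finset.sum_add_distrib]
      congr 1
      exact Finset.sum_congr rfl fun c hc => by ring
    · -- product node
      have hrec : ∀ c ∈ G.children b, fw' c = fw c + S G fw n₀ c * (t - fw n₀) :=
        fun c hc => fw'_affine hscope hfw hdec hpos hscopene hfw' c
      have huniq : ∀ c₁ ∈ G.children b, ∀ c₂ ∈ G.children b,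
          S G fw n₀ c₁ ≠ 0 → S G fw n₀ c₂ ≠ 0 → c₁ = c₂ := by
        intro c₁ hc₁ c₂ hc₂ h1 h2
        by_contra hnee
        have hdisj := hdec b h c₁ hc₁ c₂ hc₂ hnee
        obtain ⟨i, hi⟩ := hscopene n₀
        exact Finset.disjoint_left.mp hdisj
          (scope_subset_of_S_ne_zero fw scope hscope n₀ c₁ h1 hi)
          (scope_subset_of_S_ne_zero fw scope hscope n₀ c₂ h2 hi)
      have hfwb : fw b = ∏ c ∈ G.children b, fw c := by rw [hfw b]; simp only [h]
      rw [hfw' b]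
      simp only [hne, if_false, h]
      rw [Finset.prod_congr rfl (fun c hc => by rw [hrec c hc])]
      by_cases hex : ∃ c ∈ G.children b, S G fw n₀ c ≠ 0
      · obtain ⟨c₀, hc₀, hS₀⟩ := hex
        have hz : ∀ c ∈ G.children b, c ≠ c₀ → S G fw n₀ c = 0 := by
          intro c hc hcne
          by_contra hne'
          exact hcne (huniq c hc c₀ hc₀ hne' hS₀)
        have hprodsplit :
            ∏ c ∈ G.children b, (fw c + S G fw n₀ c * (t - fw n₀)) =
              (fw c₀ + S G fw n₀ c₀ * (t - fw n₀)) *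
                ∏ c ∈ (G.children b).erase c₀, fw c := by
          rw [← Finset.mul_prod_erase _ _ hc₀]
          congr 1
          exact Finset.prod_congr rfl fun c hc => by
            rw [hz c (Finset.mem_of_mem_erase hc) (Finset.ne_of_mem_erase hc)]; ring
        have hfwsplit : fw b = fw c₀ * ∏ c ∈ (G.children b).erase c₀, fw c := by
          rw [hfwb, ← Finset.mul_prod_erase _ _ hc₀]
        have hSb : S G fw n₀ b = (fw b / fw c₀) * S G fw n₀ c₀ := by
          rw [S_prod fw h hne]
          exact Finset.sum_eq_single_of_mem c₀ hc₀ fun c hc hcne => by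
            rw [hz c hc hcne]; ring
        rw [hprodsplit, hSb, hfwsplit]
        have hc0 : fw c₀ ≠ 0 := ne_of_gt (hpos c₀)
        field_simp
      · push_neg at hex
        have hSb : S G fw n₀ b = 0 := by
          rw [S_prod fw h hne]
          exact Finset.sum_eq_zero fun c hc => by rw [hex c hc]; ring
        rw [hSb, hfwb]
        rw [Finset.prod_congr rfl (fun c hc => by rw [hex c hc]; ring : ∀ c ∈ G.children b, fw c + S G fw n₀ c * (t - fw n₀) = fw c)]
        ring
  termination_by b => b.val
  decreasing_by all_goals exact G.topo _ _ (mem_children.mp hc)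

/-- Edge derivative coefficient of parent `m` w.r.t. child `a`. -/
noncomputable def Dcoef (G : PCDag d C) (fw : Fin G.n → ℝ) (m a : Fin G.n) : ℝ :=
  match G.kind m with
  | .sum => G.θ m a
  | .prod => fw m / fw a
  | .input _ _ => 0

/-- Chain rule: sensitivity w.r.t. `a` decomposes through the parents of `a`. -/
lemma S_chain {G : PCDag d C} (fw : Fin G.n → ℝ) (halt : G.Alternating) :
    ∀ b a : Fin G.n, a ≠ b →
      S G fw a b = ∑ m ∈ G.parents a, Dcoef G fw m a * S G fw m b
  | b, a, hab => by
    have hS0 : ∀ m ∈ G.parents a, S G fw m a = 0 := fun m hm =>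
      S_eq_zero_of_lt fw m a (G.topo m a (mem_parents.mp hm))
    rcases h : G.kind b with ⟨i, f⟩ | _ | _
    · rw [S_input fw h (Ne.symm hab)]
      refine (Finset.sum_eq_zero fun m hm => ?_).symm
      have hmb : m ≠ b := by
        intro hmb; subst hmb
        exact (halt m a (mem_parents.mp hm)).2.2 ⟨i, f, h⟩
      rw [S_input fw h (Ne.symm hmb)]; ring
    · -- b is a sum node
      rw [S_sum fw h (Ne.symm hab)]
      have key : ∀ c ∈ G.children b, G.θ b c * S G fw a c =
          (∑ m ∈ G.parents a, Dcoef G fw m a * (G.θ b c * S G fw m c)) +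
            (if c = a then G.θ b c else 0) := by
        intro c hc
        by_cases hca : c = a
        · subst hca
          rw [S_self, if_pos rfl]
          rw [Finset.sum_eq_zero fun m hm => by rw [hS0 m hm]; ring]
          ring
        · rw [S_chain fw halt c a (Ne.symm hca), if_neg hca, Finset.mul_sum]
          rw [add_zero]
          exact Finset.sum_congr rfl fun m hm => by ring
      rw [Finset.sum_congr rfl key, Finset.sum_add_distrib, Finset.sum_comm]
      have hite : (∑ c ∈ G.children b, if c = a then G.θ b c else 0) =
          if a ∈ G.children b then G.θ b a else 0 := Finset.sum_ite_eq' _ _ _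
      rw [hite]
      have inner : ∀ m ∈ G.parents a,
          (∑ c ∈ G.children b, Dcoef G fw m a * (G.θ b c * S G fw m c)) =
            Dcoef G fw m a * S G fw m b - (if m = b then Dcoef G fw b a else 0) := by
        intro m hm
        by_cases hmb : m = b
        · subst hmb
          rw [if_pos rfl, S_self]
          rw [Finset.sum_eq_zero fun c hc => by
            rw [S_eq_zero_of_lt fw m c (G.topo _ _ (mem_children.mp hc))]; ring]
          ring
        · rw [if_neg hmb, ← Finset.mul_sum, ← S_sum fw h (Ne.symm hmb)]; ring
      rw [Finset.sum_congr rfl inner, Finset.sum_sub_distrib]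
      have hsum_ite : (∑ m ∈ G.parents a, if m = b then Dcoef G fw b a else 0) =
          if b ∈ G.parents a then Dcoef G fw b a else 0 := Finset.sum_ite_eq' _ _ _
      rw [hsum_ite]
      have hmem : a ∈ G.children b ↔ b ∈ G.parents a := by
        rw [mem_children, mem_parents]
      have hDcoef : Dcoef G fw b a = G.θ b a := by simp [Dcoef, h]
      by_cases hedge : G.edge b a
      · rw [if_pos (mem_children.mpr hedge), if_pos (mem_parents.mpr hedge), hDcoef]; ring
      · rw [if_neg (fun hh => hedge (mem_children.mp hh)),
            if_neg (fun hh => hedge (mem_parents.mp hh))]; ring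
    · -- b is a product node
      rw [S_prod fw h (Ne.symm hab)]
      have key : ∀ c ∈ G.children b, (fw b / fw c) * S G fw a c =
          (∑ m ∈ G.parents a, Dcoef G fw m a * ((fw b / fw c) * S G fw m c)) +
            (if c = a then (fw b / fw c) else 0) := by
        intro c hc
        by_cases hca : c = a
        · subst hca
          rw [S_self, if_pos rfl]
          rw [Finset.sum_eq_zero fun m hm => by rw [hS0 m hm]; ring]
          ring
        · rw [S_chain fw halt c a (Ne.symm hca), if_neg hca, Finset.mul_sum]
          rw [add_zero]
          exact Finset.sum_congr rfl fun m hm => by ring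
      rw [Finset.sum_congr rfl key, Finset.sum_add_distrib, Finset.sum_comm]
      have hite : (∑ c ∈ G.children b, if c = a then (fw b / fw c) else 0) =
          if a ∈ G.children b then fw b / fw a else 0 := Finset.sum_ite_eq' _ _ _
      rw [hite]
      have inner : ∀ m ∈ G.parents a,
          (∑ c ∈ G.children b, Dcoef G fw m a * ((fw b / fw c) * S G fw m c)) =
            Dcoef G fw m a * S G fw m b - (if m = b then Dcoef G fw b a else 0) := by
        intro m hm
        by_cases hmb : m = b
        · subst hmb
          rw [if_pos rfl, S_self]
          rw [Finset.sum_eq_zero fun c hc => by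
            rw [S_eq_zero_of_lt fw m c (G.topo _ _ (mem_children.mp hc))]; ring]
          ring
        · rw [if_neg hmb, ← Finset.mul_sum, ← S_prod fw h (Ne.symm hmb)]; ring
      rw [Finset.sum_congr rfl inner, Finset.sum_sub_distrib]
      have hsum_ite : (∑ m ∈ G.parents a, if m = b then Dcoef G fw b a else 0) =
          if b ∈ G.parents a then Dcoef G fw b a else 0 := Finset.sum_ite_eq' _ _ _
      rw [hsum_ite]
      have hDcoef : Dcoef G fw b a = fw b / fw a := by simp [Dcoef, h]
      by_cases hedge : G.edge b a
      · rw [if_pos (mem_children.mpr hedge), if_pos (mem_parents.mpr hedge), hDcoef]; ring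
      · rw [if_neg (fun hh => hedge (mem_children.mp hh)),
            if_neg (fun hh => hedge (mem_parents.mp hh))]; ring
  termination_by b _ _ => b.val
  decreasing_by all_goals exact G.topo _ _ (mem_children.mp hc)

/-- The backward value computes the sensitivity of the root. -/
lemma S_root_eq_bk {G : PCDag d C} {fw bk : Fin G.n → ℝ}
    (hbk : G.BkFun fw bk) (halt : G.Alternating)
    (hpos : ∀ v, 0 < fw v) (hrootTop : ∀ p, ¬ G.edge p G.root) :
    ∀ a : Fin G.n, S G fw a G.root = bk a * fw G.root / fw a
  | a => by
    by_cases ha : a = G.root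
    · subst ha
      rw [S_self]
      have hb1 : bk G.root = 1 := by rw [hbk G.root]; simp
      rw [hb1, one_mul, div_self (ne_of_gt (hpos G.root))]
    · have hrec : ∀ m ∈ G.parents a, S G fw m G.root = bk m * fw G.root / fw m :=
        fun m hm => S_root_eq_bk hbk halt hpos hrootTop m
      rw [S_chain fw halt G.root a ha]
      rw [Finset.sum_congr rfl (fun m hm => by rw [hrec m hm])]
      have hprodCase : G.kind a = NodeKind.prod →
          S G fw a G.root = bk a * fw G.root / fw a → True := fun _ _ => trivial
      rcases h : G.kind a with ⟨i, f⟩ | _ | _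
      case neg.prod =>
        -- parents of a product node are sum nodes
        have hpar : ∀ m ∈ G.parents a, G.kind m = NodeKind.sum := by
          intro m hm
          have halt' := halt m a (mem_parents.mp hm)
          rcases kind_cases G m with hs | hp | hi
          · exact hs
          · rcases halt'.2.1 hp with hh | hh
            · rw [IsSum, h] at hh; cases hh
            · obtain ⟨j, g, hg⟩ := hh; rw [h] at hg; cases hg
          · exact absurd hi halt'.2.2
        have hbka : bk a = ∑ m ∈ G.parents a, (G.θ m a * fw a / fw m) * bk m := by
          rw [hbk a, if_neg ha]; simp only [h]
        rw [hbka, Finset.sum_mul, Finset.sum_div]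
        refine Finset.sum_congr rfl fun m hm => ?_
        have hD : Dcoef G fw m a = G.θ m a := by simp [Dcoef, hpar m hm]
        rw [hD]
        have h1 : fw m ≠ 0 := ne_of_gt (hpos m)
        have h2 : fw a ≠ 0 := ne_of_gt (hpos a)
        field_simp
        rw [eq_div_iff h2]
      all_goals {
        -- a is a sum or input node: parents are product nodes
        have hpar : ∀ m ∈ G.parents a, G.kind m = NodeKind.prod := by
          intro m hm
          have halt' := halt m a (mem_parents.mp hm)
          rcases kind_cases G m with hs | hp | hi
          · have := halt'.1 hs; rw [IsProd, h] at this; cases this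
          · exact hp
          · exact absurd hi halt'.2.2
        have hbka : bk a = ∑ m ∈ G.parents a, bk m := by
          rw [hbk a, if_neg ha]; simp only [h]
        rw [hbka, Finset.sum_mul, Finset.sum_div]
        refine Finset.sum_congr rfl fun m hm => ?_
        have hD : Dcoef G fw m a = fw m / fw a := by simp [Dcoef, hpar m hm]
        rw [hD]
        have h1 : fw m ≠ 0 := ne_of_gt (hpos m)
        have h2 : fw a ≠ 0 := ne_of_gt (hpos a)
        field_simp
        rw [eq_div_iff h2]
        ring
      }
  termination_by a => G.n - a.val
  decreasing_by
    have h1 := G.topo m a (mem_parents.mp hm)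
    have h2 := m.isLt
    omega

end PCDag

/-- **Perturbation semantics of the backward value**: in a smooth, decomposable PC with
strictly positive forward values, replacing the forward value of a node `n₀` by `t` changes
the root's recomputed value to `(1 − bk n₀)·fw root + bk n₀·fw root·t / fw n₀`, i.e. the
root value is an affine function of `t` with slope `bk n₀ · fw root / fw n₀`. -/
theorem backward_value_perturbation {d C : ℕ} (G : PCDag d C)
    (w : Fin d → Fin C → ℝ)
    (scope : Fin G.n → Finset (Fin d)) (hscope : G.ScopeFun scope)
    (fw : Fin G.n → ℝ) (hfw : G.FwFun w fw)
    (bk : Fin G.n → ℝ) (hbk : G.BkFun fw bk)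
    (hsm : G.Smooth scope) (hdec : G.Decomposable scope)
    (halt : G.Alternating) (hθ : G.ValidSumWeights)
    (hpos : ∀ v, 0 < fw v)
    (hne : G.InternalNonempty)
    (hscopene : ∀ v, (scope v).Nonempty)
    (hrootTop : ∀ p, ¬ G.edge p G.root)
    (n₀ : Fin G.n) (t : ℝ)
    (fw' : Fin G.n → ℝ) (hfw' : G.FwReplaceFun w n₀ t fw') :
    fw' G.root = (1 - bk n₀) * fw G.root + bk n₀ * fw G.root * (t / fw n₀) := by
  have h1 := PCDag.fw'_affine hscope hfw hdec hpos hscopene hfw' G.root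
  have h2 := PCDag.S_root_eq_bk hbk halt hpos hrootTop n₀
  rw [h2] at h1
  rw [h1]
  have hn : fw n₀ ≠ 0 := ne_of_gt (hpos n₀)
  field_simp
  ring
end
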